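/- There are no integers a, b, c with gcd(a,b) = 1 and c^l = 3a^4 + 12a^2b^2 + 2b^4 for any integer l > 1 such that 5 divides c. -/

import Mathlib

theorem stmt_4 :
    ¬ ∃ (a b c : ℤ) (l : ℕ), 1 < l ∧ Int.gcd a b = 1 ∧
      c ^ l = 3 * a ^ 4 + 12 * a ^ 2 * b ^ 2 + 2 * b ^ 4 ∧ 5 ∣ c := by
  rintro ⟨a, b, c, l, hl, hgcd, heq, ⟨k, rfl⟩⟩
  have h5 : ((3 * a ^ 4 + 12 * a ^ 2 * b ^ 2 + 2 * b ^ 4 : ℤ) : ZMod 5) = 0 := by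
    rw [← heq]
    rw [ZMod.intCast_zmod_eq_zero_iff_dvd]
    exact dvd_pow (Dvd.intro k rfl) (by omega)
  push_cast at h5
  have hne : ¬((a : ZMod 5) = 0 ∧ (b : ZMod 5) = 0) := by
    rintro ⟨ha, hb⟩
    rw [ZMod.intCast_zmod_eq_zero_iff_dvd] at ha hb
    have : (5 : ℤ) ∣ Int.gcd a b := Int.dvd_coe_gcd ha hb
    rw [hgcd] at this
    norm_num at this
  revert h5 hne
  generalize (a : ZMod 5) = x
  generalize (b : ZMod 5) = y
  revert x y
  decide
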